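/- arXiv:1605.00845 — 2 statements merged into one kernel-verified Lean document; each statement's English description precedes it below -/
import Mathlib

section
/- Let C be a countable small preadditive category and let M be a countable right C-module such that Hom_C(M, -) preserves countable direct sums. Then M is finitely generated. -/
open CategoryTheory Limits Opposite

/-- A right `C`-module `M` is finitely generated if it admits a (pointwise) surjection
from a finite direct sum of representable functors `C(-, cᵢ)`. -/
def ModuleFG (C : Type) [SmallCategory C] [Preadditive C]
    (M : Cᵒᵖ ⥤ AddCommGrpCat) : Prop :=
  ∃ (ι : Type) (_ : Fintype ι) (c : ι → C)
    (p : (∐ fun i => preadditiveYoneda.obj (c i)) ⟶ M),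
    ∀ d : Cᵒᵖ, Function.Surjective (p.app d)

/-- The canonical comparison map `⨁ᵢ Hom(M, Vᵢ) →+ Hom(M, ⊕ᵢ Vᵢ)`. -/
noncomputable def homCoproductComparison {C : Type} [SmallCategory C] [Preadditive C]
    {ι : Type} [DecidableEq ι] (M : Cᵒᵖ ⥤ AddCommGrpCat) (V : ι → (Cᵒᵖ ⥤ AddCommGrpCat)) :
    DirectSum ι (fun i => M ⟶ V i) →+ (M ⟶ ∐ V) :=
  DirectSum.toAddMonoid fun i =>
    AddMonoidHom.mk' (fun f => f ≫ Sigma.ι V i) (fun _ _ => Preadditive.add_comp _ _ _ _ _ _)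

open DirectSum

set_option linter.unusedSectionVars false
set_option linter.unusedVariables false
set_option maxHeartbeats 1000000

section Aux
variable {C : Type} [SmallCategory C] [Preadditive C]
  (M : Cᵒᵖ ⥤ AddCommGrpCat) [M.Additive]
  (x : ℕ → Σ d : Cᵒᵖ, M.obj d)

def genSet (n : ℕ) (d : Cᵒᵖ) : Set (M.obj d) :=
  { y | ∃ k < n, ∃ φ : (x k).1 ⟶ d, M.map φ (x k).2 = y }

def Gsub (n : ℕ) (d : Cᵒᵖ) : AddSubgroup (M.obj d) := AddSubgroup.closure (genSet M x n d)

lemma Gsub_le_comap (n : ℕ) {d d' : Cᵒᵖ} (ψ : d ⟶ d') :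
    Gsub M x n d ≤ (Gsub M x n d').comap (M.map ψ).hom := by
  rw [Gsub, AddSubgroup.closure_le]
  rintro y ⟨k, hk, φ, rfl⟩
  simp only [Set.mem_preimage, AddSubgroup.coe_comap]
  exact AddSubgroup.subset_closure ⟨k, hk, φ ≫ ψ, by simp⟩

def Qf (n : ℕ) : Cᵒᵖ ⥤ AddCommGrpCat where
  obj d := AddCommGrpCat.of (M.obj d ⧸ Gsub M x n d)
  map ψ := AddCommGrpCat.ofHom (QuotientAddGroup.map _ _ (M.map ψ).hom (Gsub_le_comap M x n ψ))
  map_id d := by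
    refine AddCommGrpCat.ext fun q => ?_
    induction q using QuotientAddGroup.induction_on with
    | H m => show QuotientAddGroup.map _ _ _ (Gsub_le_comap M x n (𝟙 d)) _ = _
             rw [QuotientAddGroup.map_mk]
             simp
  map_comp ψ ψ' := by
    refine AddCommGrpCat.ext fun q => ?_
    induction q using QuotientAddGroup.induction_on with
    | H m =>
      show QuotientAddGroup.map _ _ _ (Gsub_le_comap M x n (ψ ≫ ψ')) _ = _
      rw [QuotientAddGroup.map_mk]
      show _ = QuotientAddGroup.map _ _ _ (Gsub_le_comap M x n ψ') (QuotientAddGroup.map _ _ _ (Gsub_le_comap M x n ψ) (QuotientAddGroup.mk m))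
      rw [QuotientAddGroup.map_mk, QuotientAddGroup.map_mk]
      simp

lemma Qf_map_mk (n : ℕ) {d d' : Cᵒᵖ} (ψ : d ⟶ d') (m : M.obj d) :
    (Qf M x n).map ψ (QuotientAddGroup.mk m) = QuotientAddGroup.mk (M.map ψ m) :=
  QuotientAddGroup.map_mk _ _ _ (Gsub_le_comap M x n ψ) m

instance Qf_additive (n : ℕ) : (Qf M x n).Additive where
  map_add := by
    intro d d' f g
    ext q
    induction q using QuotientAddGroup.induction_on with
    | H m =>
      show (Qf M x n).map (f+g) _ = ((Qf M x n).map f + (Qf M x n).map g) _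
      rw [Qf_map_mk, M.map_add]
      show _ = (Qf M x n).map f _ + (Qf M x n).map g _
      rw [Qf_map_mk, Qf_map_mk]
      rfl

end Aux

section Aux2
variable {C : Type} [SmallCategory C] [Preadditive C]
  (W : ℕ → (Cᵒᵖ ⥤ AddCommGrpCat))

abbrev Dobj (d : Cᵒᵖ) : Type := ⨁ i, ((W i).obj d : Type)

abbrev Dof (d : Cᵒᵖ) (n : ℕ) : ((W n).obj d : Type) →+ Dobj W d :=
  DirectSum.of (fun i => ((W i).obj d : Type)) n

/-- component of an element of the direct sum -/
def cmpt (d : Cᵒᵖ) (j : ℕ) (z : Dobj W d) : ((W j).obj d : Type) := z j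

lemma cmpt_zero (d : Cᵒᵖ) (j : ℕ) : cmpt W d j 0 = 0 := rfl

lemma cmpt_add (d : Cᵒᵖ) (j : ℕ) (z₁ z₂ : Dobj W d) :
    cmpt W d j (z₁ + z₂) = cmpt W d j z₁ + cmpt W d j z₂ := DirectSum.add_apply _ _ _

lemma cmpt_of_same (d : Cᵒᵖ) (j : ℕ) (y : (W j).obj d) : cmpt W d j (Dof W d j y) = y :=
  DirectSum.of_eq_same _ _

lemma cmpt_of_ne (d : Cᵒᵖ) (i j : ℕ) (h : i ≠ j) (y : (W i).obj d) :
    cmpt W d j (Dof W d i y) = 0 :=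
  DirectSum.of_eq_of_ne _ _ _ (Ne.symm h)

def SmapAux {d d' : Cᵒᵖ} (ψ : d ⟶ d') : Dobj W d →+ Dobj W d' :=
  DirectSum.toAddMonoid fun n => (Dof W d' n).comp ((W n).map ψ).hom

lemma SmapAux_of {d d' : Cᵒᵖ} (ψ : d ⟶ d') (n : ℕ) (y : (W n).obj d) :
    SmapAux W ψ (Dof W d n y) = Dof W d' n ((W n).map ψ y) := by
  rw [SmapAux, DirectSum.toAddMonoid_of]; rfl

lemma SmapAux_cmpt {d d' : Cᵒᵖ} (ψ : d ⟶ d') (z : Dobj W d) (j : ℕ) :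
    cmpt W d' j (SmapAux W ψ z) = (W j).map ψ (cmpt W d j z) := by
  induction z using DirectSum.induction_on with
  | zero => rw [map_zero, cmpt_zero, cmpt_zero, map_zero]
  | of n y =>
    rw [SmapAux_of]
    by_cases h : n = j
    · subst h; rw [cmpt_of_same, cmpt_of_same]
    · rw [cmpt_of_ne _ _ _ _ h, cmpt_of_ne _ _ _ _ h, map_zero]
  | add z₁ z₂ h1 h2 =>
    rw [map_add, cmpt_add, cmpt_add, h1, h2, map_add]

/-- pointwise direct sum functor -/
def Sfun : Cᵒᵖ ⥤ AddCommGrpCat where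
  obj d := AddCommGrpCat.of (Dobj W d)
  map ψ := AddCommGrpCat.ofHom (SmapAux W ψ)
  map_id d := by
    refine AddCommGrpCat.hom_ext (DirectSum.addHom_ext fun n y => ?_)
    change SmapAux W (𝟙 d) (Dof W d n y) = Dof W d n y
    rw [SmapAux_of]
    simp
  map_comp ψ ψ' := by
    refine AddCommGrpCat.hom_ext (DirectSum.addHom_ext fun n y => ?_)
    change SmapAux W (_ ≫ _) (Dof W _ n y) = SmapAux W _ (SmapAux W _ (Dof W _ n y))
    rw [SmapAux_of, SmapAux_of, SmapAux_of]
    simp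

/-- injections -/
def Sinj (n : ℕ) : W n ⟶ Sfun W where
  app d := AddCommGrpCat.ofHom (Dof W d n)
  naturality d d' ψ := by
    ext y
    change Dof W d' n ((W n).map ψ y) = SmapAux W ψ (Dof W d n y)
    rw [SmapAux_of]

def Scofan : Cofan W := Cofan.mk (Sfun W) (Sinj W)

noncomputable def Sdesc (t : Cofan W) : Sfun W ⟶ t.pt where
  app d := AddCommGrpCat.ofHom (DirectSum.toAddMonoid fun n => ((t.inj n).app d).hom)
  naturality d d' ψ := by
    refine AddCommGrpCat.hom_ext (DirectSum.addHom_ext fun n y => ?_)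
    change DirectSum.toAddMonoid (fun n => ((t.inj n).app d').hom) (SmapAux W ψ (Dof W d n y)) =
      t.pt.map ψ (DirectSum.toAddMonoid (fun n => ((t.inj n).app d).hom) (Dof W d n y))
    rw [SmapAux_of, Dof, DirectSum.toAddMonoid_of, DirectSum.toAddMonoid_of]
    exact NatTrans.naturality_apply (t.inj n) ψ y

noncomputable def SisColimit : IsColimit (Scofan W) :=
  mkCofanColimit _ (fun t => Sdesc W t)
    (fun t n => by
      ext d y
      change DirectSum.toAddMonoid (fun n => ((t.inj n).app d).hom) (Dof W d n y) = (t.inj n).app d y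
      rw [Dof, DirectSum.toAddMonoid_of])
    (fun t m hm => by
      ext d : 2
      refine AddCommGrpCat.hom_ext (DirectSum.addHom_ext fun n y => ?_)
      have := congrFun (congrArg (fun (f : W n ⟶ t.pt) => ((f.app d).hom : _ → _)) (hm n)) y
      change m.app d (Dof W d n y) = DirectSum.toAddMonoid (fun n => ((t.inj n).app d).hom) (Dof W d n y)
      rw [Dof, DirectSum.toAddMonoid_of]
      simp at this
      exact this)

/-- the canonical isomorphism with the categorical coproduct -/
noncomputable def Siso : Sfun W ≅ ∐ W :=
  (SisColimit W).coconePointUniqueUpToIso (colimit.isColimit (Discrete.functor W))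

lemma Sigma_ι_comp_Siso_inv (n : ℕ) : Sigma.ι W n ≫ (Siso W).inv = Sinj W n :=
  (SisColimit W).comp_coconePointUniqueUpToIso_inv (colimit.isColimit (Discrete.functor W)) ⟨n⟩

variable (M : Cᵒᵖ ⥤ AddCommGrpCat)

/-- variant of the comparison map, towards `Sfun` -/
noncomputable def kappa' : DirectSum ℕ (fun i => M ⟶ W i) →+ (M ⟶ Sfun W) :=
  DirectSum.toAddMonoid fun i =>
    AddMonoidHom.mk' (fun f => f ≫ Sinj W i) (fun _ _ => Preadditive.add_comp _ _ _ _ _ _)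

lemma comparison_comp_inv (g : DirectSum ℕ (fun i => M ⟶ W i)) :
    homCoproductComparison M W g ≫ (Siso W).inv = kappa' W M g := by
  have : (AddMonoidHom.mk' (fun (f : M ⟶ ∐ W) => f ≫ (Siso W).inv)
      (fun _ _ => Preadditive.add_comp _ _ _ _ _ _)).comp (homCoproductComparison M W) =
      kappa' W M := by
    refine DirectSum.addHom_ext fun n f => ?_
    show (homCoproductComparison M W (DirectSum.of _ n f)) ≫ (Siso W).inv = kappa' W M (DirectSum.of _ n f)
    rw [homCoproductComparison, kappa', DirectSum.toAddMonoid_of, DirectSum.toAddMonoid_of]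
    show (f ≫ Sigma.ι W n) ≫ (Siso W).inv = f ≫ Sinj W n
    rw [Category.assoc, Sigma_ι_comp_Siso_inv]
  exact congrFun (congrArg DFunLike.coe this) g

lemma kappa'_cmpt (g : DirectSum ℕ (fun i => M ⟶ W i)) (d : Cᵒᵖ) (m : M.obj d) (j : ℕ) :
    cmpt W d j ((kappa' W M g).app d m) = (g j).app d m := by
  induction g using DirectSum.induction_on with
  | zero =>
    rw [map_zero]
    have h0 : (0 : M ⟶ Sfun W).app d m = 0 := by simp
    rw [h0]
    refine (cmpt_zero W d j).trans ?_
    have h1 : (0 : DirectSum ℕ (fun i => M ⟶ W i)) j = 0 := rfl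
    rw [h1]
    simp
  | of i f =>
    rw [kappa', DirectSum.toAddMonoid_of]
    show cmpt W d j ((f ≫ Sinj W i).app d m) = _
    have h2 : (f ≫ Sinj W i).app d m = Dof W d i (f.app d m) := rfl
    rw [h2]
    by_cases h : i = j
    · subst h
      rw [cmpt_of_same, DirectSum.of_eq_same]
    · rw [cmpt_of_ne _ _ _ _ h, DirectSum.of_eq_of_ne _ _ _ (Ne.symm h)]
      simp
  | add g₁ g₂ h1 h2 =>
    rw [map_add]
    have h3 : ((kappa' W M g₁ + kappa' W M g₂)).app d m
        = (kappa' W M g₁).app d m + (kappa' W M g₂).app d m := by simp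
    rw [h3]
    refine (cmpt_add W d j _ _).trans ?_
    rw [h1, h2, DirectSum.add_apply]
    simp

lemma directSum_exists_bound {β : ℕ → Type} [∀ n, AddCommGroup (β n)] (g : ⨁ n, β n) :
    ∃ N, ∀ j, N ≤ j → g j = 0 := by
  induction g using DirectSum.induction_on with
  | zero => exact ⟨0, fun j _ => rfl⟩
  | of i y =>
    exact ⟨i + 1, fun j hj => DirectSum.of_eq_of_ne _ _ _ (by omega)⟩
  | add a b ha hb =>
    obtain ⟨Na, hNa⟩ := ha
    obtain ⟨Nb, hNb⟩ := hb
    exact ⟨max Na Nb, fun j hj => by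
      rw [DirectSum.add_apply, hNa j (le_trans (le_max_left _ _) hj),
        hNb j (le_trans (le_max_right _ _) hj), add_zero]⟩

end Aux2

section Aux3
variable {C : Type} [SmallCategory C] [Preadditive C]
  (M : Cᵒᵖ ⥤ AddCommGrpCat) [M.Additive]
  (x : ℕ → Σ d : Cᵒᵖ, M.obj d)

lemma exists_mem_bound (hx : Function.Surjective x) (d : Cᵒᵖ) (m : M.obj d) :
    ∃ N, ∀ n, N ≤ n → m ∈ Gsub M x n d := by
  obtain ⟨k, hk⟩ := hx ⟨d, m⟩
  refine ⟨k + 1, fun n hn => AddSubgroup.subset_closure ⟨k, by omega, ?_⟩⟩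
  rw [hk]
  exact ⟨𝟙 d, by simp⟩

/-- the underlying function of the diagonal-ish morphism -/
noncomputable def FdiagFun (hx : Function.Surjective x) (d : Cᵒᵖ) (m : M.obj d) :
    Dobj (Qf M x) d :=
  DirectSum.mk (fun n => ((Qf M x n).obj d : Type))
    (Finset.range ((exists_mem_bound M x hx d m).choose))
    (fun n => QuotientAddGroup.mk m)

lemma FdiagFun_cmpt (hx : Function.Surjective x) (d : Cᵒᵖ) (m : M.obj d) (j : ℕ) :
    cmpt (Qf M x) d j (FdiagFun M x hx d m) = QuotientAddGroup.mk m := by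
  refine (DFinsupp.mk_apply (β := fun n => ((Qf M x n).obj d : Type))
    (s := Finset.range ((exists_mem_bound M x hx d m).choose))
    (x := fun n => QuotientAddGroup.mk m) (i := j)).trans ?_
  by_cases h : j ∈ Finset.range ((exists_mem_bound M x hx d m).choose)
  · exact dif_pos h
  · refine (dif_neg h).trans ?_
    symm
    refine (QuotientAddGroup.eq_zero_iff m).mpr ?_
    exact (exists_mem_bound M x hx d m).choose_spec j (by simpa using h)

/-- the diagonal-ish morphism `M ⟶ ⊕ₙ M/Mₙ` -/
noncomputable def Fdiag (hx : Function.Surjective x) : M ⟶ Sfun (Qf M x) where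
  app d := AddCommGrpCat.ofHom <| AddMonoidHom.mk' (FdiagFun M x hx d) (fun a b => by
    refine DFinsupp.ext fun j => ?_
    exact (FdiagFun_cmpt M x hx d (a + b) j).trans <|
      ((QuotientAddGroup.mk_add (Gsub M x j d) a b).trans
        (congrArg₂ (· + ·) (FdiagFun_cmpt M x hx d a j).symm
          (FdiagFun_cmpt M x hx d b j).symm)).trans
        (DirectSum.add_apply _ _ _).symm)
  naturality d d' ψ := by
    ext m
    change FdiagFun M x hx d' (M.map ψ m) = SmapAux (Qf M x) ψ (FdiagFun M x hx d m)
    refine DFinsupp.ext fun j => ?_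
    change cmpt (Qf M x) d' j (FdiagFun M x hx d' (M.map ψ m))
      = cmpt (Qf M x) d' j (SmapAux (Qf M x) ψ (FdiagFun M x hx d m))
    rw [SmapAux_cmpt, FdiagFun_cmpt, FdiagFun_cmpt, Qf_map_mk]

lemma Fdiag_cmpt (hx : Function.Surjective x) (d : Cᵒᵖ) (m : M.obj d) (j : ℕ) :
    cmpt (Qf M x) d j ((Fdiag M x hx).app d m) = QuotientAddGroup.mk m :=
  FdiagFun_cmpt M x hx d m j

end Aux3
section Aux4
variable {C : Type} [SmallCategory C] [Preadditive C]
  (M : Cᵒᵖ ⥤ AddCommGrpCat) [M.Additive]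

/-- the morphism from a representable functor classified by an element -/
def eltHom (d : Cᵒᵖ) (m : M.obj d) : preadditiveYoneda.obj (unop d) ⟶ M where
  app e := AddCommGrpCat.ofHom <| AddMonoidHom.mk' (fun (φ : unop e ⟶ unop d) => M.map φ.op m)
    (fun a b => by
      show M.map ((a : unop e ⟶ unop d) + (b : unop e ⟶ unop d)).op m
        = M.map (a : unop e ⟶ unop d).op m + M.map (b : unop e ⟶ unop d).op m
      have h := congrArg (fun f => (M.map f).hom m) (CategoryTheory.op_add (f := (a : unop e ⟶ unop d)) (g := b))
      rw [M.map_add] at h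
      exact h)
  naturality e e' ψ := by
    ext (φ : unop e ⟶ unop d)
    show M.map (ψ.unop ≫ φ).op m = M.map ψ (M.map φ.op m)
    rw [op_comp, Quiver.Hom.op_unop, M.map_comp]
    rfl

lemma eltHom_app (d : Cᵒᵖ) (m : M.obj d) (e : Cᵒᵖ) (φ : unop e ⟶ unop d) :
    (eltHom M d m).app e φ = M.map φ.op m := rfl

end Aux4

/-- Let `C` be a countable small preadditive category and `M` a countable right
`C`-module such that `Hom_C(M, -)` preserves countable direct sums.  Then `M` is
finitely generated. -/
theorem fg_of_hom_preserves_countable_direct_sums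
    (C : Type) [SmallCategory C] [Preadditive C]
    [Countable C] [∀ c d : C, Countable (c ⟶ d)]
    (M : Cᵒᵖ ⥤ AddCommGrpCat) [M.Additive] [∀ d : Cᵒᵖ, Countable (M.obj d)]
    (hM : ∀ (ι : Type) [Countable ι] [DecidableEq ι]
      (V : ι → (Cᵒᵖ ⥤ AddCommGrpCat)) [∀ i, (V i).Additive],
      Function.Bijective (homCoproductComparison M V)) :
    ModuleFG C M := by
  by_cases hC : IsEmpty C
  · exact ⟨PEmpty, inferInstance, PEmpty.elim, 0, fun d => (hC.false d.unop).elim⟩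
  haveI : Nonempty C := not_isEmpty_iff.mp hC
  haveI : Countable Cᵒᵖ := Countable.of_equiv C Opposite.equivToOpposite
  haveI : Nonempty (Σ d : Cᵒᵖ, M.obj d) := ⟨⟨op (Classical.arbitrary C), 0⟩⟩
  obtain ⟨x, hx⟩ := exists_surjective_nat (Σ d : Cᵒᵖ, M.obj d)
  set W := Qf M x with hW
  -- apply the hypothesis
  obtain ⟨g, hg⟩ := (hM ℕ W).2 (Fdiag M x hx ≫ (Siso W).hom)
  have hfe : homCoproductComparison M W g ≫ (Siso W).inv = Fdiag M x hx := by
    rw [hg, Category.assoc, Iso.hom_inv_id, Category.comp_id]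
  obtain ⟨N, hN⟩ := directSum_exists_bound g
  -- M is generated by the first N elements
  have key : ∀ (d : Cᵒᵖ) (m : M.obj d), m ∈ Gsub M x N d := by
    intro d m
    have h1 : cmpt W d N ((homCoproductComparison M W g ≫ (Siso W).inv).app d m)
        = cmpt W d N ((Fdiag M x hx).app d m) := by rw [hfe]
    rw [comparison_comp_inv, kappa'_cmpt, Fdiag_cmpt, hN N le_rfl] at h1
    have h2 : (0 : M ⟶ W N).app d m = 0 := by simp
    rw [h2] at h1
    exact (QuotientAddGroup.eq_zero_iff m).mp h1.symm
  -- assemble the finite generation data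
  refine ⟨Fin N, inferInstance, fun k => unop (x (k : ℕ)).1,
    Sigma.desc (fun k => eltHom M (x (k : ℕ)).1 (x (k : ℕ)).2), fun d m => ?_⟩
  set p := Sigma.desc (fun k : Fin N => eltHom M (x (k : ℕ)).1 (x (k : ℕ)).2)
  have hle : Gsub M x N d ≤ (p.app d).hom.range := by
    rw [Gsub, AddSubgroup.closure_le]
    rintro y ⟨k, hk, φ, rfl⟩
    refine ⟨(Sigma.ι (fun k : Fin N => preadditiveYoneda.obj (unop (x (k : ℕ)).1)) ⟨k, hk⟩).app d φ.unop, ?_⟩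
    have h1 : Sigma.ι (fun k : Fin N => preadditiveYoneda.obj (unop (x (k : ℕ)).1)) ⟨k, hk⟩ ≫ p
        = eltHom M (x k).1 (x k).2 := Sigma.ι_desc _ _
    have h2 := congrArg (fun (q : preadditiveYoneda.obj (unop (x k).1) ⟶ M) => q.app d φ.unop) h1
    simp only at h2
    rw [NatTrans.comp_app] at h2
    exact h2.trans (by rw [eltHom_app, Quiver.Hom.op_unop])
  obtain ⟨w, hw⟩ := hle (key d m)
  exact ⟨w, hw⟩
end

section
/- Let T be a triangulated category with countable coproducts, let S be a compact object of T, and let X^0 → X^1 → X^2 → ... be a sequence of morphisms in T with homotopy colimit hocolim_n X^n (defined by the triangle ⊕_n X^n → ⊕_n X^n → hocolim_n X^n → Σ⊕_n X^n, where the first map is 1 − shift). Then the canonical map colim_n Hom_T(S, X^n) → Hom_T(S, hocolim_n X^n) is an isomorphism. -/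
open CategoryTheory Limits Pretriangulated

universe v u

/-- The canonical comparison map `⨁ᵢ Hom(S, Yᵢ) →+ Hom(S, ∐ᵢ Yᵢ)` in a preadditive
category with coproducts. -/
noncomputable def coproductComparisonHom {T : Type u} [Category.{v} T] [Preadditive T]
    {ι : Type} [DecidableEq ι] (S : T) (Y : ι → T) [HasCoproduct Y] :
    DirectSum ι (fun i => S ⟶ Y i) →+ (S ⟶ ∐ Y) :=
  DirectSum.toAddMonoid fun i =>
    AddMonoidHom.mk' (fun f => f ≫ Sigma.ι Y i) (fun _ _ => Preadditive.add_comp _ _ _ _ _ _)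

/-- `S` is compact if `Hom(S, -)` preserves countable coproducts. -/
def IsCompactObject {T : Type u} [Category.{v} T] [Preadditive T] [HasCoproducts.{0} T]
    (S : T) : Prop :=
  ∀ (ι : Type) [DecidableEq ι] [Countable ι] (Y : ι → T),
    Function.Bijective (coproductComparisonHom S Y)

/-- The composite `X n ⟶ X (n + m)` of a sequence of morphisms. -/
def chainCompose {T : Type u} [Category.{v} T] (X : ℕ → T) (f : ∀ n, X n ⟶ X (n + 1)) :
    ∀ n m, X n ⟶ X (n + m)
  | _, 0 => 𝟙 _
  | n, (m + 1) => chainCompose X f n m ≫ f (n + m)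

section Aux

variable {T : Type u} [Category.{v} T] [Preadditive T]

/-- A non-dependent version of `chainCompose`: the canonical map `Y k ⟶ Y N`
(zero when `k > N`). -/
def trAux (Y : ℕ → T) (u : ∀ n, Y n ⟶ Y (n + 1)) : ∀ k N, Y k ⟶ Y N
  | k, 0 => if h : k = 0 then eqToHom (congrArg Y h) else 0
  | k, N + 1 => if h : k = N + 1 then eqToHom (congrArg Y h) else trAux Y u k N ≫ u N

lemma trAux_self (Y : ℕ → T) (u : ∀ n, Y n ⟶ Y (n + 1)) (k : ℕ) :
    trAux Y u k k = 𝟙 _ := by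
  cases k with
  | zero => rw [trAux, dif_pos rfl]; rfl
  | succ n => rw [trAux, dif_pos rfl]; rfl

lemma trAux_gt (Y : ℕ → T) (u : ∀ n, Y n ⟶ Y (n + 1)) {k N : ℕ} (h : N < k) :
    trAux Y u k N = 0 := by
  induction N with
  | zero => rw [trAux, dif_neg (by omega)]
  | succ N ih => rw [trAux, dif_neg (by omega), ih (by omega), zero_comp]

lemma trAux_succ (Y : ℕ → T) (u : ∀ n, Y n ⟶ Y (n + 1)) {k N : ℕ} (h : k ≤ N) :
    trAux Y u k (N + 1) = trAux Y u k N ≫ u N := by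
  rw [trAux, dif_neg (by omega)]

lemma trAux_left (Y : ℕ → T) (u : ∀ n, Y n ⟶ Y (n + 1)) {k N : ℕ} (h : k < N) :
    trAux Y u k N = u k ≫ trAux Y u (k + 1) N := by
  induction N with
  | zero => omega
  | succ N ih =>
    rcases Nat.lt_succ_iff_lt_or_eq.mp h with h' | h'
    · rw [trAux_succ Y u (by omega), ih h', trAux_succ Y u (by omega), Category.assoc]
    · subst h'
      rw [trAux_succ Y u le_rfl, trAux_self, trAux_self, Category.comp_id, Category.id_comp]

lemma trAux_chain (X : ℕ → T) (f : ∀ n, X n ⟶ X (n + 1)) (n m : ℕ) :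
    trAux X f n (n + m) = chainCompose X f n m := by
  induction m with
  | zero => exact trAux_self X f n
  | succ m ih =>
    show trAux X f n ((n + m) + 1) = chainCompose X f n m ≫ f (n + m)
    rw [trAux_succ X f (Nat.le_add_right n m), ih]

/-- Post-composition as an additive map. -/
def postcompHom (S : T) {A B : T} (p : A ⟶ B) : (S ⟶ A) →+ (S ⟶ B) :=
  AddMonoidHom.mk' (fun ψ => ψ ≫ p) fun _ _ => Preadditive.add_comp _ _ _ _ _ _

@[simp] lemma postcompHom_apply (S : T) {A B : T} (p : A ⟶ B) (ψ : S ⟶ A) :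
    postcompHom S p ψ = ψ ≫ p := rfl

/-- The algebraic shift map on `⨁ₖ Hom(S, Y k)`. -/
def shStarHom (S : T) (Y : ℕ → T) (u : ∀ n, Y n ⟶ Y (n + 1)) :
    DirectSum ℕ (fun k => S ⟶ Y k) →+ DirectSum ℕ (fun k => S ⟶ Y k) :=
  DirectSum.toAddMonoid fun k =>
    (DirectSum.of (fun k => S ⟶ Y k) (k + 1)).comp (postcompHom S (u k))

/-- The `N`-th "projection" `⨁ₖ Hom(S, Y k) →+ Hom(S, Y N)` pushing everything forward. -/
def projHom (S : T) (Y : ℕ → T) (u : ∀ n, Y n ⟶ Y (n + 1)) (N : ℕ) :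
    DirectSum ℕ (fun k => S ⟶ Y k) →+ (S ⟶ Y N) :=
  DirectSum.toAddMonoid fun k => postcompHom S (trAux Y u k N)

variable [HasCoproducts.{0} T]

lemma c_of (S : T) (Y : ℕ → T) (k : ℕ) (ψ : S ⟶ Y k) :
    coproductComparisonHom S Y (DirectSum.of (fun k => S ⟶ Y k) k ψ) = ψ ≫ Sigma.ι Y k := by
  simp [coproductComparisonHom]

lemma shStar_of (S : T) (Y : ℕ → T) (u : ∀ n, Y n ⟶ Y (n + 1)) (k : ℕ) (ψ : S ⟶ Y k) :
    shStarHom S Y u (DirectSum.of (fun k => S ⟶ Y k) k ψ)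
      = DirectSum.of (fun k => S ⟶ Y k) (k + 1) (ψ ≫ u k) := by
  simp [shStarHom]

lemma proj_of (S : T) (Y : ℕ → T) (u : ∀ n, Y n ⟶ Y (n + 1)) (N k : ℕ) (ψ : S ⟶ Y k) :
    projHom S Y u N (DirectSum.of (fun k => S ⟶ Y k) k ψ) = ψ ≫ trAux Y u k N := by
  simp [projHom]

lemma shStar_apply_zero (S : T) (Y : ℕ → T) (u : ∀ n, Y n ⟶ Y (n + 1))
    (x : DirectSum ℕ (fun k => S ⟶ Y k)) : shStarHom S Y u x 0 = 0 := by
  induction x using DirectSum.induction_on with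
  | zero => rw [map_zero]; rfl
  | of i ψ =>
    rw [shStar_of]
    exact DirectSum.of_eq_of_ne _ _ _ (by omega)
  | add x y hx hy =>
    rw [map_add, DirectSum.add_apply, hx, hy, add_zero]

lemma shStar_apply_succ (S : T) (Y : ℕ → T) (u : ∀ n, Y n ⟶ Y (n + 1))
    (x : DirectSum ℕ (fun k => S ⟶ Y k)) (k : ℕ) :
    shStarHom S Y u x (k + 1) = x k ≫ u k := by
  induction x using DirectSum.induction_on with
  | zero => rw [map_zero]; simp
  | of i ψ =>
    rw [shStar_of]
    by_cases h : i = k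
    · subst h
      rw [DirectSum.of_eq_same, DirectSum.of_eq_same]
    · rw [DirectSum.of_eq_of_ne _ _ _ (by omega), DirectSum.of_eq_of_ne _ _ _ (Ne.symm h), zero_comp]
  | add x y hx hy =>
    rw [map_add, DirectSum.add_apply, DirectSum.add_apply, hx, hy, Preadditive.add_comp]

lemma c_shStar (S : T) (Y : ℕ → T) (u : ∀ n, Y n ⟶ Y (n + 1))
    (x : DirectSum ℕ (fun k => S ⟶ Y k)) :
    coproductComparisonHom S Y (shStarHom S Y u x)
      = coproductComparisonHom S Y x ≫ Sigma.desc (fun n => u n ≫ Sigma.ι Y (n + 1)) := by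
  have key : (coproductComparisonHom S Y).comp (shStarHom S Y u)
      = (postcompHom S (Sigma.desc (fun n => u n ≫ Sigma.ι Y (n + 1)))).comp
          (coproductComparisonHom S Y) := by
    refine DirectSum.addHom_ext fun k ψ => ?_
    simp only [AddMonoidHom.comp_apply, shStar_of, c_of, postcompHom_apply, Category.assoc,
      colimit.ι_desc, Cofan.mk_pt, Cofan.mk_ι_app]
  exact DFunLike.congr_fun key x

lemma inj_one_sub_sh (S : T) (hS : IsCompactObject S) (Y : ℕ → T)
    (u : ∀ n, Y n ⟶ Y (n + 1)) (β : S ⟶ ∐ Y)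
    (hβ : β ≫ (𝟙 (∐ Y) - Sigma.desc (fun n => u n ≫ Sigma.ι Y (n + 1))) = 0) : β = 0 := by
  obtain ⟨x, rfl⟩ := (hS ℕ Y).2 β
  rw [Preadditive.comp_sub, Category.comp_id, sub_eq_zero] at hβ
  have h2 : x = shStarHom S Y u x := (hS ℕ Y).1 (by rw [c_shStar]; exact hβ)
  have h3 : ∀ k, x k = 0 := by
    intro k
    induction k with
    | zero => rw [h2]; exact shStar_apply_zero S Y u x
    | succ k ih =>
      conv_lhs => rw [h2]
      rw [shStar_apply_succ, ih, zero_comp]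
  have hx0 : x = 0 := DFinsupp.ext fun k => h3 k
  rw [hx0, map_zero]

lemma proj_shStar (S : T) (Y : ℕ → T) (u : ∀ n, Y n ⟶ Y (n + 1)) (N : ℕ)
    (x : DirectSum ℕ (fun k => S ⟶ Y k)) (hx : ∀ k, N ≤ k → x k = 0) :
    projHom S Y u N (shStarHom S Y u x) = projHom S Y u N x := by
  classical
  have hrep := DirectSum.sum_support_of x
  conv_lhs => rw [← hrep]
  conv_rhs => rw [← hrep]
  rw [map_sum, map_sum, map_sum]
  refine Finset.sum_congr rfl fun k hk => ?_
  have hkN : k < N := by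
    by_contra h'
    exact (DFinsupp.mem_support_iff.mp hk) (hx k (by omega))
  rw [shStar_of, proj_of, proj_of, trAux_left Y u hkN, Category.assoc]

end Aux

/-- Let `T` be a triangulated category with countable coproducts, `S` a compact object,
and `X⁰ → X¹ → ⋯` a sequence with homotopy colimit `H`, given by a distinguished
triangle `∐ₙ Xⁿ →^{1 - Sh} ∐ₙ Xⁿ →^{g} H → Σ ∐ₙ Xⁿ`.  Then the canonical map
`colimₙ Hom(S, Xⁿ) → Hom(S, H)` is an isomorphism: every `S ⟶ H` factors through some
`Xⁿ`, and any `S ⟶ Xⁿ` which dies in `H` dies in some `X^{n+m}`. -/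
theorem compact_hom_hocolim {T : Type u} [Category.{v} T] [Preadditive T]
    [HasZeroObject T] [HasShift T ℤ] [∀ n : ℤ, (shiftFunctor T n).Additive]
    [Pretriangulated T] [HasCoproducts.{0} T]
    (S : T) (hS : IsCompactObject S)
    (X : ℕ → T) (f : ∀ n, X n ⟶ X (n + 1))
    (H : T) (g : (∐ X) ⟶ H) (h : H ⟶ (∐ X)⟦(1 : ℤ)⟧)
    (hT : Triangle.mk (𝟙 (∐ X) - Sigma.desc (fun n => f n ≫ Sigma.ι X (n + 1))) g h ∈
      distTriang T) :
    (∀ φ : S ⟶ H, ∃ (n : ℕ) (ψ : S ⟶ X n), φ = ψ ≫ Sigma.ι X n ≫ g) ∧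
    (∀ (n : ℕ) (ψ : S ⟶ X n), ψ ≫ Sigma.ι X n ≫ g = 0 →
      ∃ m : ℕ, ψ ≫ chainCompose X f n m = 0) := by
  have hc := hS ℕ X
  -- the key identity `ι k ≫ g = f k ≫ ι (k+1) ≫ g`
  have hdg : Sigma.desc (fun n => f n ≫ Sigma.ι X (n + 1)) ≫ g = g := by
    have h12 := comp_distTriang_mor_zero₁₂ _ hT
    change (𝟙 (∐ X) - Sigma.desc (fun n => f n ≫ Sigma.ι X (n + 1))) ≫ g = 0 at h12
    rw [Preadditive.sub_comp, Category.id_comp, sub_eq_zero] at h12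
    exact h12.symm
  have hfg : ∀ k, Sigma.ι X k ≫ g = f k ≫ Sigma.ι X (k + 1) ≫ g := by
    intro k
    conv_lhs => rw [← hdg]
    rw [← Category.assoc, colimit.ι_desc]
    simp
  have hιg : ∀ N k, k ≤ N → Sigma.ι X k ≫ g = trAux X f k N ≫ Sigma.ι X N ≫ g := by
    intro N
    induction N with
    | zero =>
      intro k hk
      interval_cases k
      rw [trAux_self, Category.id_comp]
    | succ N ih =>
      intro k hk
      by_cases hkN : k = N + 1
      · subst hkN; rw [trAux_self, Category.id_comp]
      · calc Sigma.ι X k ≫ g = trAux X f k N ≫ Sigma.ι X N ≫ g := ih k (by omega)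
          _ = trAux X f k N ≫ f N ≫ Sigma.ι X (N + 1) ≫ g := by rw [hfg N]
          _ = trAux X f k (N + 1) ≫ Sigma.ι X (N + 1) ≫ g := by
              rw [trAux_succ X f (by omega), Category.assoc]
  constructor
  · -- surjectivity onto maps to H
    intro φ
    -- Step A : φ ≫ h = 0
    have key : φ ≫ h = 0 := by
      have hzero : φ ≫ h ≫ (shiftFunctor T (1 : ℤ)).map
          (𝟙 (∐ X) - Sigma.desc fun n => f n ≫ Sigma.ι X (n + 1)) = 0 := by
        have h31 := comp_distTriang_mor_zero₃₁ _ hT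
        change h ≫ (shiftFunctor T (1 : ℤ)).map (𝟙 (∐ X) - Sigma.desc (fun n => f n ≫ Sigma.ι X (n + 1))) = 0 at h31
        rw [h31, comp_zero]
      have hcomm : (𝟙 (∐ fun k => (shiftFunctor T (1 : ℤ)).obj (X k)) -
            Sigma.desc fun n => (shiftFunctor T (1 : ℤ)).map (f n) ≫
              Sigma.ι (fun k => (shiftFunctor T (1 : ℤ)).obj (X k)) (n + 1)) ≫
            sigmaComparison (shiftFunctor T (1 : ℤ)) X
          = sigmaComparison (shiftFunctor T (1 : ℤ)) X ≫ (shiftFunctor T (1 : ℤ)).map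
              (𝟙 (∐ X) - Sigma.desc fun n => f n ≫ Sigma.ι X (n + 1)) := by
        apply colimit.hom_ext
        rintro ⟨k⟩
        simp only [Preadditive.comp_sub, Preadditive.sub_comp, Functor.map_sub,
          Functor.map_id, Category.id_comp, Category.comp_id, Category.assoc,
          colimit.ι_desc, colimit.ι_desc_assoc, Cofan.mk_pt, Cofan.mk_ι_app,
          ι_comp_sigmaComparison, ι_comp_sigmaComparison_assoc, ← Functor.map_comp]
      have hβ : ((φ ≫ h) ≫ inv (sigmaComparison (shiftFunctor T (1 : ℤ)) X)) ≫
          (𝟙 (∐ fun k => (shiftFunctor T (1 : ℤ)).obj (X k)) -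
            Sigma.desc fun n => (shiftFunctor T (1 : ℤ)).map (f n) ≫
              Sigma.ι (fun k => (shiftFunctor T (1 : ℤ)).obj (X k)) (n + 1)) = 0 := by
        rw [← cancel_mono (sigmaComparison (shiftFunctor T (1 : ℤ)) X), zero_comp,
          Category.assoc, hcomm]
        simp only [Category.assoc, IsIso.inv_hom_id_assoc]
        exact hzero
      have hz := inj_one_sub_sh S hS (fun k => (shiftFunctor T (1 : ℤ)).obj (X k))
        (fun k => (shiftFunctor T (1 : ℤ)).map (f k))
        ((φ ≫ h) ≫ inv (sigmaComparison (shiftFunctor T (1 : ℤ)) X)) hβ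
      have := congrArg (· ≫ sigmaComparison (shiftFunctor T (1 : ℤ)) X) hz
      simpa using this
    obtain ⟨α, hα⟩ := Triangle.coyoneda_exact₃ _ hT φ key
    change φ = α ≫ g at hα
    obtain ⟨x, rfl⟩ := hc.2 α
    -- factor `c x ≫ g` through a single inclusion
    have factor : ∀ x : DirectSum ℕ (fun k => S ⟶ X k),
        ∃ (N : ℕ) (ψ : S ⟶ X N),
          coproductComparisonHom S X x ≫ g = ψ ≫ Sigma.ι X N ≫ g := by
      intro x
      induction x using DirectSum.induction_on with
      | zero => exact ⟨0, 0, by rw [map_zero, zero_comp, zero_comp]⟩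
      | of k ψ => exact ⟨k, ψ, by rw [c_of, Category.assoc]⟩
      | add x y hx hy =>
        obtain ⟨N₁, ψ₁, h₁⟩ := hx
        obtain ⟨N₂, ψ₂, h₂⟩ := hy
        refine ⟨max N₁ N₂, ψ₁ ≫ trAux X f N₁ (max N₁ N₂) + ψ₂ ≫ trAux X f N₂ (max N₁ N₂), ?_⟩
        rw [map_add, Preadditive.add_comp, h₁, h₂, hιg (max N₁ N₂) N₁ (le_max_left _ _),
          hιg (max N₁ N₂) N₂ (le_max_right _ _), Preadditive.add_comp, Category.assoc,
          Category.assoc]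
    obtain ⟨N, ψ, hψ⟩ := factor x
    exact ⟨N, ψ, hα.trans hψ⟩
  · -- vanishing
    intro n ψ hψ0
    obtain ⟨α, hα⟩ := Triangle.coyoneda_exact₂ _ hT (ψ ≫ Sigma.ι X n)
      (by show (ψ ≫ Sigma.ι X n) ≫ g = 0; rw [Category.assoc]; exact hψ0)
    change ψ ≫ Sigma.ι X n = α ≫ (𝟙 (∐ X) - Sigma.desc (fun n => f n ≫ Sigma.ι X (n + 1))) at hα
    obtain ⟨x, rfl⟩ := hc.2 α
    have heq : DirectSum.of (fun k => S ⟶ X k) n ψ = x - shStarHom S X f x := by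
      apply hc.1
      rw [map_sub, c_of, c_shStar, hα]
      exact (Preadditive.comp_sub _ _ _).trans (congrArg (· - _) (Category.comp_id _))
    classical
    set N := (x.support.sup id) + n + 1 with hN
    have hsupp : ∀ k, N ≤ k → x k = 0 := by
      intro k hk
      by_contra h0
      have hmem : k ∈ x.support := DFinsupp.mem_support_iff.mpr h0
      have := Finset.le_sup (f := id) hmem
      simp only [id] at this
      omega
    have hproj : projHom S X f N (DirectSum.of (fun k => S ⟶ X k) n ψ) = 0 := by
      rw [heq, map_sub, proj_shStar S X f N x hsupp, sub_self]
    rw [proj_of] at hproj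
    refine ⟨N - n, ?_⟩
    rw [← trAux_chain X f n (N - n), show n + (N - n) = N by omega]
    exact hproj
end
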